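/- Assume d_v > 0 for every v∈V, λ > 0, and s∈ℝ^V. Define 𝓓_λ(η) = ∑_{e∈E}‖η_e‖₁²/(8w_e) + (1/(2λ))∑_{v∈V}(s_v − (Bη)_v)²/d_v for η∈𝓨. Then 𝓟_λ attains its minimum over ℝ^V, 𝓓_λ attains its minimum over 𝓨, and min_{x∈ℝ^V} 𝓟_λ(x) = − min_{η∈𝓨} 𝓓_λ(η). Moreover, if η* minimizes 𝓓_λ over 𝓨, then the unique minimizer x* of 𝓟_λ is given by x*_v = (s_v − (Bη*)_v)/(λ d_v) for every v∈V. -/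

import Mathlib

set_option linter.unusedSectionVars false
set_option linter.unusedVariables false
set_option linter.unreachableTactic false
set_option linter.unusedTactic false


open Finset

section

variable {V : Type*} [Fintype V] [DecidableEq V] [Nonempty V]
variable {E : Type*} [Fintype E]

/-- The edge range `R_e(x) = max_{u∈e} x_u - min_{v∈e} x_v`. -/
noncomputable def eRange (edge : E → Finset V) (hne : ∀ e, (edge e).Nonempty)
    (x : V → ℝ) (e : E) : ℝ :=
  (edge e).sup' (hne e) x - (edge e).inf' (hne e) x

/-- The ℓ¹ norm on ℝ^V. -/
def l1norm (η : V → ℝ) : ℝ := ∑ v, |η v|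

/-- Membership in `U_e`: supported on `e` and zero-sum. -/
def memUe (edge : E → Finset V) (e : E) (η : V → ℝ) : Prop :=
  (∀ v, v ∉ edge e → η v = 0) ∧ ∑ v, η v = 0

/-- Membership in `𝓨 = ∏_e U_e`. -/
def memY (edge : E → Finset V) (η : E → V → ℝ) : Prop := ∀ e, memUe edge e (η e)

/-- The aggregation map `Bη = ∑_e η_e`. -/
def Bmap (η : E → V → ℝ) : V → ℝ := fun v => ∑ e, η e v

/-- Weighted degree `d_v = ∑_{e ∋ v} w_e`. -/
noncomputable def degw (edge : E → Finset V) (w : E → ℝ) (v : V) : ℝ :=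
  ∑ e ∈ univ.filter (fun e => v ∈ edge e), w e

/-- The regularized objective `𝓟_λ`. -/
noncomputable def Plam (edge : E → Finset V) (hne : ∀ e, (edge e).Nonempty)
    (w : E → ℝ) (s : V → ℝ) (lam : ℝ) (x : V → ℝ) : ℝ :=
  (1 / 2) * ∑ e, w e * (eRange edge hne x e) ^ 2
    + lam / 2 * ∑ v, degw edge w v * (x v) ^ 2
    - ∑ v, s v * x v

/-- The regularized dual objective `𝓓_λ`. -/
noncomputable def Dlam (edge : E → Finset V) (w : E → ℝ) (s : V → ℝ) (lam : ℝ)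
    (η : E → V → ℝ) : ℝ :=
  (∑ e, (l1norm (η e)) ^ 2 / (8 * w e))
    + (1 / (2 * lam)) * ∑ v, (s v - Bmap η v) ^ 2 / degw edge w v

-- basic facts
lemma l1norm_nonneg (η : V → ℝ) : 0 ≤ l1norm η :=
  Finset.sum_nonneg fun _ _ => abs_nonneg _

lemma eRange_nonneg (edge : E → Finset V) (hne : ∀ e, (edge e).Nonempty)
    (x : V → ℝ) (e : E) : 0 ≤ eRange edge hne x e := by
  obtain ⟨v, hv⟩ := hne e
  have h1 : (edge e).inf' (hne e) x ≤ x v := Finset.inf'_le x hv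
  have h2 : x v ≤ (edge e).sup' (hne e) x := Finset.le_sup' x hv
  simp only [eRange]; linarith

/-- Key lemma: for η ∈ U_e, ⟨η, x⟩ ≤ ‖η‖₁/2 · R_e(x). -/
lemma key_bound (edge : E → Finset V) (hne : ∀ e, (edge e).Nonempty)
    (x : V → ℝ) (e : E) (η : V → ℝ) (hη : memUe edge e η) :
    ∑ v, η v * x v ≤ l1norm η / 2 * eRange edge hne x e := by
  set M := (edge e).sup' (hne e) x with hM
  set m := (edge e).inf' (hne e) x with hm
  have hsum : ∑ v, η v * x v = ∑ v, η v * (x v - (M + m) / 2) := by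
    rw [show ∑ v, η v * (x v - (M + m) / 2)
        = ∑ v, η v * x v - (M + m) / 2 * ∑ v, η v by
      rw [Finset.mul_sum, ← Finset.sum_sub_distrib]
      exact Finset.sum_congr rfl fun v _ => by ring]
    rw [hη.2]; ring
  rw [hsum]
  have : ∀ v ∈ (univ : Finset V), η v * (x v - (M + m) / 2) ≤ |η v| * ((M - m) / 2) := by
    intro v _
    by_cases hv : v ∈ edge e
    · have h1 : x v ≤ M := Finset.le_sup' x hv
      have h2 : m ≤ x v := Finset.inf'_le x hv
      calc η v * (x v - (M + m) / 2) ≤ |η v * (x v - (M + m) / 2)| := le_abs_self _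
        _ = |η v| * |x v - (M + m) / 2| := abs_mul _ _
        _ ≤ |η v| * ((M - m) / 2) := by
            apply mul_le_mul_of_nonneg_left _ (abs_nonneg _)
            rw [abs_le]; constructor <;> linarith
    · rw [hη.1 v hv]; simp
  calc ∑ v, η v * (x v - (M + m) / 2) ≤ ∑ v, |η v| * ((M - m) / 2) :=
        Finset.sum_le_sum this
    _ = l1norm η / 2 * eRange edge hne x e := by
        rw [← Finset.sum_mul]; simp only [l1norm, eRange]; ring

/-- Per-edge weak duality. -/
lemma edge_weak (edge : E → Finset V) (hne : ∀ e, (edge e).Nonempty)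
    (w : E → ℝ) (hw : ∀ e, 0 < w e)
    (x : V → ℝ) (e : E) (η : V → ℝ) (hη : memUe edge e η) :
    ∑ v, η v * x v - (l1norm η) ^ 2 / (8 * w e) ≤ w e * (eRange edge hne x e) ^ 2 / 2 := by
  have h1 := key_bound edge hne x e η hη
  have h2 := l1norm_nonneg η
  have h3 := eRange_nonneg edge hne x e
  have hw' := hw e
  have key : l1norm η / 2 * eRange edge hne x e - (l1norm η) ^ 2 / (8 * w e)
      ≤ w e * (eRange edge hne x e) ^ 2 / 2 := by
    have h8 : (0:ℝ) < 8 * w e := by linarith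
    set a := l1norm η
    set R := eRange edge hne x e
    have heq : 8 * w e * (w e * R ^ 2 / 2 + a ^ 2 / (8 * w e) - a / 2 * R)
        = (a - 2 * w e * R) ^ 2 := by field_simp; ring
    nlinarith [sq_nonneg (a - 2 * w e * R)]
  linarith

section Chunk2
variable (edge : E → Finset V) (hne : ∀ e, (edge e).Nonempty)
    (w : E → ℝ) (s : V → ℝ) (lam : ℝ)

lemma PD_expand (x : V → ℝ) (η : E → V → ℝ) :
    Plam edge hne w s lam x + Dlam edge w s lam η
      = (∑ e, (w e * (eRange edge hne x e) ^ 2 / 2 + (l1norm (η e)) ^ 2 / (8 * w e)))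
        + ∑ v, (lam / 2 * degw edge w v * (x v) ^ 2 - s v * x v
            + 1 / (2 * lam) * ((s v - Bmap η v) ^ 2 / degw edge w v)) := by
  simp only [Plam, Dlam, Finset.sum_add_distrib, Finset.sum_sub_distrib, Finset.mul_sum]
  ring_nf

lemma swap_sum (x : V → ℝ) (η : E → V → ℝ) :
    ∑ v, Bmap η v * x v = ∑ e, ∑ v, η e v * x v := by
  rw [Finset.sum_comm]
  exact Finset.sum_congr rfl fun v _ => by rw [Bmap, Finset.sum_mul]

variable (hw : ∀ e, 0 < w e) (hlam : 0 < lam) (hd : ∀ v, 0 < degw edge w v)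
include hw hlam hd

lemma vertex_ineq (x : V → ℝ) (η : E → V → ℝ) (v : V) :
    - (Bmap η v * x v) ≤ lam / 2 * degw edge w v * (x v) ^ 2 - s v * x v
      + 1 / (2 * lam) * ((s v - Bmap η v) ^ 2 / degw edge w v) := by
  have hdv := hd v
  set d := degw edge w v
  set a := s v - Bmap η v with ha
  have hB : Bmap η v = s v - a := by rw [ha]; ring
  rw [hB]
  have hkey : 2 * lam * d * (lam / 2 * d * (x v) ^ 2 + 1 / (2 * lam) * (a ^ 2 / d) - x v * a)
      = (lam * d * x v - a) ^ 2 := by field_simp; ring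
  nlinarith [sq_nonneg (lam * d * x v - a), mul_pos hlam hdv]

lemma weak_duality (x : V → ℝ) (η : E → V → ℝ) (hη : memY edge η) :
    - Dlam edge w s lam η ≤ Plam edge hne w s lam x := by
  have hexp := PD_expand edge hne w s lam x η
  have h1 : ∑ v, Bmap η v * x v
      ≤ ∑ e, (w e * (eRange edge hne x e) ^ 2 / 2 + (l1norm (η e)) ^ 2 / (8 * w e)) := by
    rw [swap_sum]
    refine Finset.sum_le_sum fun e _ => ?_
    have := edge_weak edge hne w hw x e (η e) (hη e)
    linarith
  have h2 : ∑ v, (- (Bmap η v * x v))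
      ≤ ∑ v, (lam / 2 * degw edge w v * (x v) ^ 2 - s v * x v
          + 1 / (2 * lam) * ((s v - Bmap η v) ^ 2 / degw edge w v)) :=
    Finset.sum_le_sum fun v _ => vertex_ineq edge w s lam hw hlam hd x η v
  have h3 : ∑ v, (- (Bmap η v * x v)) = - ∑ v, Bmap η v * x v := by
    rw [Finset.sum_neg_distrib]
  rw [h3] at h2
  linarith

end Chunk2

lemma small_t {Φ K : ℝ} (hK : 0 ≤ K)
    (h : ∀ t : ℝ, 0 < t → t ≤ 1 → 0 ≤ t * Φ + t ^ 2 * K) : 0 ≤ Φ := by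
  by_contra hneg
  push_neg at hneg
  have hK1 : (0:ℝ) < 2 * (K + 1) := by linarith
  set t := min 1 (-Φ / (2 * (K + 1))) with ht
  have ht0 : 0 < t := lt_min one_pos (div_pos (by linarith) hK1)
  have ht1 : t ≤ 1 := min_le_left _ _
  have h2 : t ≤ -Φ / (2 * (K + 1)) := min_le_right _ _
  have h2' : t * (2 * (K + 1)) ≤ -Φ := by
    rw [← le_div_iff₀ hK1]; exact h2
  have h3 := h t ht0 ht1
  nlinarith [mul_le_mul_of_nonneg_left h2' ht0.le, sq_nonneg t]

lemma l1_convex_sq (a b : V → ℝ) (t : ℝ) (ht0 : 0 ≤ t) (ht1 : t ≤ 1) :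
    l1norm (fun v => (1 - t) * a v + t * b v) ^ 2
      ≤ (1 - t) * (l1norm a) ^ 2 + t * (l1norm b) ^ 2 := by
  have h1 : l1norm (fun v => (1 - t) * a v + t * b v)
      ≤ (1 - t) * l1norm a + t * l1norm b := by
    simp only [l1norm, Finset.mul_sum]
    rw [← Finset.sum_add_distrib]
    refine Finset.sum_le_sum fun v _ => ?_
    calc |(1 - t) * a v + t * b v| ≤ |(1 - t) * a v| + |t * b v| := abs_add_le _ _
      _ = (1 - t) * |a v| + t * |b v| := by
          rw [abs_mul, abs_mul, abs_of_nonneg (by linarith : (0:ℝ) ≤ 1 - t),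
            abs_of_nonneg ht0]
  have h0 : 0 ≤ l1norm (fun v => (1 - t) * a v + t * b v) := l1norm_nonneg _
  have ha := l1norm_nonneg a
  have hb := l1norm_nonneg b
  nlinarith [sq_nonneg (l1norm a - l1norm b), mul_nonneg (mul_nonneg ht0 (by linarith : (0:ℝ) ≤ 1 - t)) (sq_nonneg (l1norm a - l1norm b))]

lemma attain (edge : E → Finset V) (hne : ∀ e, (edge e).Nonempty)
    (w : E → ℝ) (hw : ∀ e, 0 < w e) (x : V → ℝ) (e : E) :
    ∃ ξ : V → ℝ, memUe edge e ξ ∧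
      (l1norm ξ) ^ 2 / (8 * w e) - ∑ v, ξ v * x v
        ≤ - (w e * (eRange edge hne x e) ^ 2 / 2) := by
  obtain ⟨u, hu, hxu⟩ := Finset.exists_mem_eq_sup' (hne e) x
  obtain ⟨v0, hv0, hxv0⟩ := Finset.exists_mem_eq_inf' (hne e) x
  have hR : 0 ≤ eRange edge hne x e := eRange_nonneg edge hne x e
  have hwe := hw e
  set R := eRange edge hne x e with hRdef
  set c := w e * R with hc
  have hc0 : 0 ≤ c := mul_nonneg hwe.le hR
  refine ⟨fun v => c * ((if v = u then 1 else 0) - (if v = v0 then 1 else 0)), ?_, ?_⟩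
  · constructor
    · intro v hv
      have h1 : v ≠ u := fun h => hv (h ▸ hu)
      have h2 : v ≠ v0 := fun h => hv (h ▸ hv0)
      simp [h1, h2]
    · have : ∀ v : V, c * ((if v = u then (1:ℝ) else 0) - (if v = v0 then 1 else 0))
          = (if v = u then c else 0) - (if v = v0 then c else 0) := by
        intro v; split_ifs <;> ring
      rw [Finset.sum_congr rfl fun v _ => this v, Finset.sum_sub_distrib,
        Finset.sum_ite_eq' univ u (fun _ => c), Finset.sum_ite_eq' univ v0 (fun _ => c)]
      simp
  · have hinner : ∑ v, (c * ((if v = u then (1:ℝ) else 0) - (if v = v0 then 1 else 0))) * x v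
        = c * R := by
      have : ∀ v : V, (c * ((if v = u then (1:ℝ) else 0) - (if v = v0 then 1 else 0))) * x v
          = (if v = u then c * x v else 0) - (if v = v0 then c * x v else 0) := by
        intro v; split_ifs <;> ring
      rw [Finset.sum_congr rfl fun v _ => this v, Finset.sum_sub_distrib,
        Finset.sum_ite_eq' univ u (fun v => c * x v), Finset.sum_ite_eq' univ v0 (fun v => c * x v)]
      simp only [Finset.mem_univ, if_true]
      rw [hRdef]
      simp only [eRange, ← hxu, ← hxv0]
      ring
    have hl1 : l1norm (fun v => c * ((if v = u then (1:ℝ) else 0) - (if v = v0 then 1 else 0)))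
        ≤ 2 * c := by
      simp only [l1norm]
      have hb : ∀ v : V, |c * ((if v = u then (1:ℝ) else 0) - (if v = v0 then 1 else 0))|
          ≤ (if v = u then c else 0) + (if v = v0 then c else 0) := by
        intro v
        rw [abs_mul, abs_of_nonneg hc0]
        split_ifs <;> simp_all <;> nlinarith [abs_nonneg (1 - ite True (1:ℝ) 0)]
      calc ∑ v, |c * ((if v = u then (1:ℝ) else 0) - (if v = v0 then 1 else 0))|
          ≤ ∑ v, ((if v = u then c else 0) + (if v = v0 then c else 0)) :=
            Finset.sum_le_sum fun v _ => hb v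
        _ = 2 * c := by
            rw [Finset.sum_add_distrib, Finset.sum_ite_eq' univ u (fun _ => c),
              Finset.sum_ite_eq' univ v0 (fun _ => c)]
            simp; ring
    rw [hinner]
    have hl1nn := l1norm_nonneg (fun v => c * ((if v = u then (1:ℝ) else 0) - (if v = v0 then 1 else 0)))
    have hsq : (l1norm (fun v => c * ((if v = u then (1:ℝ) else 0) - (if v = v0 then 1 else 0)))) ^ 2
        ≤ (2 * c) ^ 2 := by nlinarith
    have h8 : (0:ℝ) < 8 * w e := by linarith
    have : (2 * c) ^ 2 / (8 * w e) = w e * R ^ 2 / 2 := by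
      rw [hc]; field_simp; ring
    calc (l1norm _) ^ 2 / (8 * w e) - c * R ≤ (2 * c) ^ 2 / (8 * w e) - c * R :=
          by apply sub_le_sub_right; gcongr
      _ = w e * R ^ 2 / 2 - c * R := by rw [this]
      _ = - (w e * R ^ 2 / 2) := by rw [hc]; ring

lemma phi_min (edge : E → Finset V) (hne : ∀ e, (edge e).Nonempty)
    (w : E → ℝ) (s : V → ℝ) (lam : ℝ)
    (hw : ∀ e, 0 < w e) (hlam : 0 < lam) (hd : ∀ v, 0 < degw edge w v)
    (η' : E → V → ℝ) (hη' : memY edge η')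
    (hmin : ∀ η, memY edge η → Dlam edge w s lam η' ≤ Dlam edge w s lam η)
    (x' : V → ℝ) (hx' : ∀ v, x' v = (s v - Bmap η' v) / (lam * degw edge w v))
    (e : E) (ξ : V → ℝ) (hξ : memUe edge e ξ) :
    (l1norm (η' e)) ^ 2 / (8 * w e) - ∑ v, η' e v * x' v
      ≤ (l1norm ξ) ^ 2 / (8 * w e) - ∑ v, ξ v * x' v := by
  classical
  set b : V → ℝ := fun v => ξ v - η' e v with hb
  set A := l1norm (η' e) with hA
  set Bn := l1norm ξ with hBn
  set S1 := ∑ v, x' v * b v with hS1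
  set S2 := ∑ v, (b v) ^ 2 / degw edge w v with hS2
  set S0 := ∑ v, (s v - Bmap η' v) ^ 2 / degw edge w v with hS0
  set SD := ∑ e' ∈ univ \ {e}, (l1norm (η' e')) ^ 2 / (8 * w e') with hSD
  have h8 : (0:ℝ) < 8 * w e := by linarith [hw e]
  have hK0 : 0 ≤ 1 / (2 * lam) * S2 := by
    apply mul_nonneg (by positivity)
    exact Finset.sum_nonneg fun v _ => div_nonneg (sq_nonneg _) (hd v).le
  have hmain : 0 ≤ (Bn ^ 2 - A ^ 2) / (8 * w e) - S1 := by
    apply small_t hK0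
    intro t ht0 ht1
    set ν : V → ℝ := fun v => (1 - t) * η' e v + t * ξ v with hν
    set ηt := Function.update η' e ν with hηt
    have hηtY : memY edge ηt := by
      intro e'
      by_cases h : e' = e
      · subst h
        rw [hηt]
        simp only [Function.update_self]
        refine ⟨fun v hv => ?_, ?_⟩
        · show (1 - t) * η' e' v + t * ξ v = 0
          rw [(hη' e').1 v hv, hξ.1 v hv]; ring
        · show ∑ v, ((1 - t) * η' e' v + t * ξ v) = 0
          rw [show ∑ v, ((1 - t) * η' e' v + t * ξ v)
              = (1 - t) * ∑ v, η' e' v + t * ∑ v, ξ v by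
            rw [Finset.mul_sum, Finset.mul_sum, ← Finset.sum_add_distrib]]
          rw [(hη' e').2, hξ.2]; ring
      · rw [hηt]
        simp only [Function.update_of_ne h]
        exact hη' e'
    have hDle := hmin ηt hηtY
    have hfem : e ∈ (univ : Finset E) := Finset.mem_univ e
    -- first sum of D at ηt
    have hF_t : ∑ e', (l1norm (ηt e')) ^ 2 / (8 * w e')
        = (l1norm ν) ^ 2 / (8 * w e) + SD := by
      have happ : (fun e' => (l1norm (ηt e')) ^ 2 / (8 * w e'))
          = Function.update (fun e' => (l1norm (η' e')) ^ 2 / (8 * w e')) e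
              ((l1norm ν) ^ 2 / (8 * w e)) := by
        rw [hηt]; funext j
        exact Function.apply_update (fun j ηj => (l1norm ηj) ^ 2 / (8 * w j)) η' e ν j
      calc ∑ e', (l1norm (ηt e')) ^ 2 / (8 * w e')
          = ∑ e', Function.update (fun e' => (l1norm (η' e')) ^ 2 / (8 * w e')) e
              ((l1norm ν) ^ 2 / (8 * w e)) e' := by rw [← happ]
        _ = (l1norm ν) ^ 2 / (8 * w e) + SD := Finset.sum_update_of_mem hfem _ _
    have hF_0 : ∑ e', (l1norm (η' e')) ^ 2 / (8 * w e') = SD + A ^ 2 / (8 * w e) :=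
      Finset.sum_eq_sum_sdiff_singleton_add hfem _
    -- Bmap of ηt
    have hBt : ∀ v, Bmap ηt v = Bmap η' v + t * b v := by
      intro v
      have happ2 : (fun e' => ηt e' v) = Function.update (fun e' => η' e' v) e (ν v) := by
        rw [hηt]; funext j
        exact Function.apply_update (fun j ηj => ηj v) η' e ν j
      have h1 : Bmap ηt v = ν v + ∑ e' ∈ univ \ {e}, η' e' v := by
        show ∑ e', ηt e' v = _
        calc ∑ e', ηt e' v
            = ∑ e', Function.update (fun e' => η' e' v) e (ν v) e' := by rw [← happ2]
          _ = ν v + ∑ e' ∈ univ \ {e}, η' e' v := Finset.sum_update_of_mem hfem _ _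
      have h2 : Bmap η' v = (∑ e' ∈ univ \ {e}, η' e' v) + η' e v :=
        Finset.sum_eq_sum_sdiff_singleton_add hfem _
      rw [h1, hν, hb]
      simp only
      rw [show (∑ e' ∈ univ \ {e}, η' e' v) = Bmap η' v - η' e v by rw [h2]; ring]
      ring
    -- second sum of D at ηt
    have hsecond : ∑ v, (s v - Bmap ηt v) ^ 2 / degw edge w v
        = S0 - (2 * t * lam) * S1 + t ^ 2 * S2 := by
      have hpt : ∀ v ∈ (univ : Finset V),
          (s v - Bmap ηt v) ^ 2 / degw edge w v
            = (s v - Bmap η' v) ^ 2 / degw edge w v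
              - (2 * t * lam) * (x' v * b v) + t ^ 2 * ((b v) ^ 2 / degw edge w v) := by
        intro v _
        rw [hBt v, hx' v]
        have h1 : (degw edge w v) ≠ 0 := (hd v).ne'
        have h2 : lam ≠ 0 := hlam.ne'
        field_simp
        ring
      rw [Finset.sum_congr rfl hpt]
      rw [Finset.sum_add_distrib, Finset.sum_sub_distrib, ← Finset.mul_sum, ← Finset.mul_sum]
    -- expand D at ηt and η'
    have hDt_eq : Dlam edge w s lam ηt
        = (l1norm ν) ^ 2 / (8 * w e) + SD
          + 1 / (2 * lam) * (S0 - (2 * t * lam) * S1 + t ^ 2 * S2) := by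
      show (∑ e', (l1norm (ηt e')) ^ 2 / (8 * w e'))
          + (1 / (2 * lam)) * ∑ v, (s v - Bmap ηt v) ^ 2 / degw edge w v = _
      rw [hF_t, hsecond]
    have hD0_eq : Dlam edge w s lam η' = SD + A ^ 2 / (8 * w e) + 1 / (2 * lam) * S0 := by
      show (∑ e', (l1norm (η' e')) ^ 2 / (8 * w e'))
          + (1 / (2 * lam)) * ∑ v, (s v - Bmap η' v) ^ 2 / degw edge w v = _
      rw [hF_0]
    have heq2 : 1 / (2 * lam) * (S0 - (2 * t * lam) * S1 + t ^ 2 * S2)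
        = 1 / (2 * lam) * S0 - t * S1 + t ^ 2 * (1 / (2 * lam) * S2) := by
      field_simp
    rw [hDt_eq, hD0_eq, heq2] at hDle
    have hl1b : (l1norm ν) ^ 2 / (8 * w e)
        ≤ ((1 - t) * A ^ 2 + t * Bn ^ 2) / (8 * w e) := by
      gcongr
      exact l1_convex_sq (η' e) ξ t ht0.le ht1
    have hexpand : ((1 - t) * A ^ 2 + t * Bn ^ 2) / (8 * w e)
        = A ^ 2 / (8 * w e) + t * ((Bn ^ 2 - A ^ 2) / (8 * w e)) := by ring
    rw [hexpand] at hl1b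
    have hgoal : t * ((Bn ^ 2 - A ^ 2) / (8 * w e) - S1) + t ^ 2 * (1 / (2 * lam) * S2)
        = t * ((Bn ^ 2 - A ^ 2) / (8 * w e)) - t * S1 + t ^ 2 * (1 / (2 * lam) * S2) := by
      ring
    rw [hgoal]
    linarith
  have hsplit : S1 = ∑ v, ξ v * x' v - ∑ v, η' e v * x' v := by
    rw [hS1, ← Finset.sum_sub_distrib]
    exact Finset.sum_congr rfl fun v _ => by rw [hb]; ring
  rw [hsplit] at hmain
  have hBA : (Bn ^ 2 - A ^ 2) / (8 * w e) = Bn ^ 2 / (8 * w e) - A ^ 2 / (8 * w e) := by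
    ring
  rw [hBA] at hmain
  linarith

lemma strong_dual (edge : E → Finset V) (hne : ∀ e, (edge e).Nonempty)
    (w : E → ℝ) (s : V → ℝ) (lam : ℝ)
    (hw : ∀ e, 0 < w e) (hlam : 0 < lam) (hd : ∀ v, 0 < degw edge w v)
    (η' : E → V → ℝ) (hη' : memY edge η')
    (hmin : ∀ η, memY edge η → Dlam edge w s lam η' ≤ Dlam edge w s lam η)
    (x' : V → ℝ) (hx' : ∀ v, x' v = (s v - Bmap η' v) / (lam * degw edge w v)) :
    Plam edge hne w s lam x' = - Dlam edge w s lam η'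
      ∧ ∀ x, Plam edge hne w s lam x' ≤ Plam edge hne w s lam x := by
  have hedge_eq : ∀ e, w e * (eRange edge hne x' e) ^ 2 / 2 + (l1norm (η' e)) ^ 2 / (8 * w e)
      = ∑ v, η' e v * x' v := by
    intro e
    have h1 := edge_weak edge hne w hw x' e (η' e) (hη' e)
    obtain ⟨ξ, hξU, hξle⟩ := attain edge hne w hw x' e
    have h2 := phi_min edge hne w s lam hw hlam hd η' hη' hmin x' hx' e ξ hξU
    linarith
  have hvert_eq : ∀ v, lam / 2 * degw edge w v * (x' v) ^ 2 - s v * x' v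
      + 1 / (2 * lam) * ((s v - Bmap η' v) ^ 2 / degw edge w v) = - (Bmap η' v * x' v) := by
    intro v
    rw [hx' v]
    have h1 : (degw edge w v) ≠ 0 := (hd v).ne'
    have h2 : lam ≠ 0 := hlam.ne'
    field_simp
    ring
  have hPD : Plam edge hne w s lam x' + Dlam edge w s lam η' = 0 := by
    rw [PD_expand]
    rw [Finset.sum_congr rfl fun e _ => hedge_eq e, ← swap_sum,
      Finset.sum_congr rfl fun v _ => hvert_eq v]
    rw [← Finset.sum_add_distrib]
    simp
  constructor
  · linarith
  · intro x
    have := weak_duality edge hne w s lam hw hlam hd x η' hη'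
    linarith

/-- Uniqueness of the minimizer of P. -/
lemma P_uniq (edge : E → Finset V) (hne : ∀ e, (edge e).Nonempty)
    (w : E → ℝ) (s : V → ℝ) (lam : ℝ)
    (hw : ∀ e, 0 < w e) (hlam : 0 < lam) (hd : ∀ v, 0 < degw edge w v)
    (x y : V → ℝ)
    (hx : ∀ z, Plam edge hne w s lam x ≤ Plam edge hne w s lam z)
    (hy : ∀ z, Plam edge hne w s lam y ≤ Plam edge hne w s lam z) :
    x = y := by
  set m : V → ℝ := fun v => (x v + y v) / 2 with hm
  have hPxy : Plam edge hne w s lam x = Plam edge hne w s lam y :=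
    le_antisymm (hx y) (hy x)
  have hR : ∀ e, eRange edge hne m e ≤ (eRange edge hne x e + eRange edge hne y e) / 2 := by
    intro e
    have hsup : (edge e).sup' (hne e) m
        ≤ ((edge e).sup' (hne e) x + (edge e).sup' (hne e) y) / 2 := by
      apply Finset.sup'_le
      intro u hu
      have h1 : x u ≤ (edge e).sup' (hne e) x := Finset.le_sup' x hu
      have h2 : y u ≤ (edge e).sup' (hne e) y := Finset.le_sup' y hu
      rw [hm]; simp only; linarith
    have hinf : ((edge e).inf' (hne e) x + (edge e).inf' (hne e) y) / 2
        ≤ (edge e).inf' (hne e) m := by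
      apply Finset.le_inf'
      intro u hu
      have h1 : (edge e).inf' (hne e) x ≤ x u := Finset.inf'_le x hu
      have h2 : (edge e).inf' (hne e) y ≤ y u := Finset.inf'_le y hu
      rw [hm]; simp only; linarith
    simp only [eRange]
    linarith
  have hRsq : ∀ e, w e * (eRange edge hne m e) ^ 2
      ≤ (w e * (eRange edge hne x e) ^ 2 + w e * (eRange edge hne y e) ^ 2) / 2 := by
    intro e
    have h0 := eRange_nonneg edge hne m e
    have h1 := eRange_nonneg edge hne x e
    have h2 := eRange_nonneg edge hne y e
    have h3 := hR e
    have hwe := hw e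
    have h4 : (eRange edge hne m e) ^ 2
        ≤ ((eRange edge hne x e + eRange edge hne y e) / 2) ^ 2 := by nlinarith
    have h5 := mul_le_mul_of_nonneg_left h4 hwe.le
    have h6 : 0 ≤ w e * (eRange edge hne x e - eRange edge hne y e) ^ 2 :=
      mul_nonneg hwe.le (sq_nonneg _)
    nlinarith [h5, h6]
  have hquad : ∀ v, degw edge w v * (m v) ^ 2
      = (degw edge w v * (x v) ^ 2 + degw edge w v * (y v) ^ 2) / 2
        - degw edge w v * ((x v - y v) / 2) ^ 2 := by
    intro v; rw [hm]; ring
  have hPm : Plam edge hne w s lam m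
      ≤ (Plam edge hne w s lam x + Plam edge hne w s lam y) / 2
        - lam / 2 * ∑ v, degw edge w v * ((x v - y v) / 2) ^ 2 := by
    simp only [Plam]
    have e1 : ∑ e, w e * (eRange edge hne m e) ^ 2
        ≤ (∑ e, w e * (eRange edge hne x e) ^ 2 + ∑ e, w e * (eRange edge hne y e) ^ 2) / 2 := by
      calc ∑ e, w e * (eRange edge hne m e) ^ 2
          ≤ ∑ e, ((w e * (eRange edge hne x e) ^ 2 + w e * (eRange edge hne y e) ^ 2) / 2) :=
            Finset.sum_le_sum fun e _ => hRsq e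
        _ = (∑ e, w e * (eRange edge hne x e) ^ 2 + ∑ e, w e * (eRange edge hne y e) ^ 2) / 2 := by
            rw [← Finset.sum_div, Finset.sum_add_distrib]
    have e2 : ∑ v, degw edge w v * (m v) ^ 2
        = (∑ v, degw edge w v * (x v) ^ 2 + ∑ v, degw edge w v * (y v) ^ 2) / 2
          - ∑ v, degw edge w v * ((x v - y v) / 2) ^ 2 := by
      rw [Finset.sum_congr rfl fun v _ => hquad v, Finset.sum_sub_distrib]
      congr 1
      rw [← Finset.sum_div, Finset.sum_add_distrib]
    have e3 : ∑ v, s v * m v = (∑ v, s v * x v + ∑ v, s v * y v) / 2 := by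
      rw [Finset.sum_congr rfl (fun v _ => (by rw [hm]; ring :
        s v * m v = (s v * x v + s v * y v) / 2)), ← Finset.sum_div, Finset.sum_add_distrib]
    rw [e2, e3]
    nlinarith [e1]
  have hsum0 : ∑ v, degw edge w v * ((x v - y v) / 2) ^ 2 ≤ 0 := by
    have h1 := hx m
    nlinarith [hPm, hPxy]
  have hterm : ∀ v ∈ (univ : Finset V), degw edge w v * ((x v - y v) / 2) ^ 2 = 0 := by
    intro v hv
    have hnn : ∀ u ∈ (univ : Finset V), 0 ≤ degw edge w u * ((x u - y u) / 2) ^ 2 :=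
      fun u _ => mul_nonneg (hd u).le (sq_nonneg _)
    by_contra h
    have hpos : 0 < degw edge w v * ((x v - y v) / 2) ^ 2 :=
      lt_of_le_of_ne (hnn v hv) (Ne.symm h)
    have hlt : 0 < ∑ v, degw edge w v * ((x v - y v) / 2) ^ 2 :=
      Finset.sum_pos' (fun u _ => hnn u (Finset.mem_univ u)) ⟨v, hv, hpos⟩
    linarith
  funext v
  have := hterm v (Finset.mem_univ v)
  have hdv := hd v
  have : ((x v - y v) / 2) ^ 2 = 0 := by
    by_contra h
    have : 0 < ((x v - y v) / 2) ^ 2 := lt_of_le_of_ne (sq_nonneg _) (Ne.symm h)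
    nlinarith
  have := pow_eq_zero_iff (n := 2) (by norm_num) |>.mp this
  linarith [this]

lemma Dlam_continuous (edge : E → Finset V) (w : E → ℝ) (s : V → ℝ) (lam : ℝ) :
    Continuous (Dlam edge w s lam) := by
  unfold Dlam l1norm Bmap
  apply Continuous.add
  · apply continuous_finset_sum
    intro e _
    apply Continuous.div_const
    apply Continuous.pow
    apply continuous_finset_sum
    intro v _
    exact ((continuous_apply v).comp (continuous_apply e)).abs
  · apply Continuous.mul continuous_const
    apply continuous_finset_sum
    intro v _
    apply Continuous.div_const
    apply Continuous.pow
    apply Continuous.sub continuous_const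
    apply continuous_finset_sum
    intro e _
    exact (continuous_apply v).comp (continuous_apply e)

lemma memY_closed (edge : E → Finset V) :
    IsClosed {η : E → V → ℝ | memY edge η} := by
  have : {η : E → V → ℝ | memY edge η}
      = (⋂ e, ⋂ v, ⋂ (_ : v ∉ edge e), {η : E → V → ℝ | η e v = 0})
        ∩ ⋂ e, {η : E → V → ℝ | ∑ v, η e v = 0} := by
    ext η
    simp only [Set.mem_setOf_eq, Set.mem_inter_iff, Set.mem_iInter, memY, memUe]
    constructor
    · exact fun h => ⟨fun e v hv => (h e).1 v hv, fun e => (h e).2⟩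
    · exact fun h e => ⟨fun v hv => h.1 e v hv, h.2 e⟩
  rw [this]
  apply IsClosed.inter
  · refine isClosed_iInter fun e => isClosed_iInter fun v => isClosed_iInter fun _ => ?_
    exact isClosed_eq ((continuous_apply v).comp (continuous_apply e)) continuous_const
  · refine isClosed_iInter fun e => ?_
    exact isClosed_eq (continuous_finset_sum _ fun v _ =>
      (continuous_apply v).comp (continuous_apply e)) continuous_const

lemma D_exists (edge : E → Finset V) (hne : ∀ e, (edge e).Nonempty)
    (w : E → ℝ) (s : V → ℝ) (lam : ℝ)
    (hw : ∀ e, 0 < w e) (hlam : 0 < lam) (hd : ∀ v, 0 < degw edge w v) :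
    ∃ η' : E → V → ℝ, memY edge η'
      ∧ ∀ η, memY edge η → Dlam edge w s lam η' ≤ Dlam edge w s lam η := by
  classical
  set D0 := Dlam edge w s lam (fun _ _ => 0) with hD0
  have hD0nn : 0 ≤ D0 := by
    rw [hD0]
    unfold Dlam
    apply add_nonneg
    · exact Finset.sum_nonneg fun e _ => div_nonneg (sq_nonneg _) (by linarith [hw e])
    · apply mul_nonneg (by positivity)
      exact Finset.sum_nonneg fun v _ => div_nonneg (sq_nonneg _) (hd v).le
  set W := (∑ e, w e) + 1 with hW
  have hW0 : 0 < W := by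
    rw [hW]
    have : 0 ≤ ∑ e, w e := Finset.sum_nonneg fun e _ => (hw e).le
    linarith
  set M := Real.sqrt (8 * W * (D0 + 1)) with hM
  have hM0 : 0 ≤ M := Real.sqrt_nonneg _
  have hMsq : M ^ 2 = 8 * W * (D0 + 1) := Real.sq_sqrt (by positivity)
  have hMe : ∀ e, 8 * w e * (D0 + 1) ≤ M ^ 2 := by
    intro e
    rw [hMsq]
    have h1 : w e ≤ W := by
      rw [hW]
      have := Finset.single_le_sum (f := w) (fun e _ => (hw e).le) (Finset.mem_univ e)
      linarith
    nlinarith [hw e]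
  set S : Set (E → V → ℝ) := {η | memY edge η ∧ ∀ e, l1norm (η e) ≤ M} with hS
  have h0Y : memY edge (fun _ _ => (0:ℝ)) := fun e => ⟨fun v _ => rfl, by simp⟩
  have h0S : (fun _ _ => (0:ℝ)) ∈ S := by
    refine ⟨h0Y, fun e => ?_⟩
    simp [l1norm, hM0]
  have hSclosed : IsClosed S := by
    have hS2 : S = {η : E → V → ℝ | memY edge η} ∩ {η : E → V → ℝ | ∀ e, l1norm (η e) ≤ M} := by
      ext η; simp [hS, Set.mem_setOf_eq]
    rw [hS2]
    apply IsClosed.inter (memY_closed edge)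
    have : {η : E → V → ℝ | ∀ e, l1norm (η e) ≤ M}
        = ⋂ e, {η : E → V → ℝ | l1norm (η e) ≤ M} := by
      ext η; simp [Set.mem_iInter]
    rw [this]
    refine isClosed_iInter fun e => ?_
    exact isClosed_le (continuous_finset_sum _ fun v _ =>
      ((continuous_apply v).comp (continuous_apply e)).abs) continuous_const
  have hsub : S ⊆ Metric.closedBall 0 M := by
    intro η hη
    rw [Metric.mem_closedBall, dist_zero_right]
    rw [pi_norm_le_iff_of_nonneg hM0]
    intro e
    rw [pi_norm_le_iff_of_nonneg hM0]
    intro v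
    rw [Real.norm_eq_abs]
    calc |η e v| ≤ ∑ u, |η e u| :=
          Finset.single_le_sum (fun u _ => abs_nonneg (η e u)) (Finset.mem_univ v)
      _ = l1norm (η e) := rfl
      _ ≤ M := hη.2 e
  have hScomp : IsCompact S :=
    IsCompact.of_isClosed_subset (isCompact_closedBall 0 M) hSclosed hsub
  obtain ⟨η', hη'S, hminS⟩ :=
    hScomp.exists_isMinOn ⟨_, h0S⟩ (Dlam_continuous edge w s lam).continuousOn
  refine ⟨η', hη'S.1, fun η hηY => ?_⟩
  by_cases hcase : ∀ e, l1norm (η e) ≤ M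
  · exact isMinOn_iff.mp hminS η ⟨hηY, hcase⟩
  · push_neg at hcase
    obtain ⟨e0, he0⟩ := hcase
    have hup : Dlam edge w s lam η' ≤ D0 := isMinOn_iff.mp hminS _ h0S
    have t1 : M ^ 2 ≤ l1norm (η e0) ^ 2 := by nlinarith [l1norm_nonneg (η e0)]
    have hw0 : (0:ℝ) < 8 * w e0 := by linarith [hw e0]
    have t2 : D0 + 1 ≤ l1norm (η e0) ^ 2 / (8 * w e0) := by
      rw [le_div_iff₀ hw0]
      calc (D0 + 1) * (8 * w e0) = 8 * w e0 * (D0 + 1) := by ring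
        _ ≤ M ^ 2 := hMe e0
        _ ≤ l1norm (η e0) ^ 2 := t1
    have t3 : l1norm (η e0) ^ 2 / (8 * w e0) ≤ ∑ e, l1norm (η e) ^ 2 / (8 * w e) :=
      Finset.single_le_sum (f := fun e => l1norm (η e) ^ 2 / (8 * w e))
        (fun e _ => div_nonneg (sq_nonneg _) (by linarith [hw e])) (Finset.mem_univ e0)
    have t4 : (0:ℝ) ≤ 1 / (2 * lam) * ∑ v, (s v - Bmap η v) ^ 2 / degw edge w v := by
      apply mul_nonneg (by positivity)
      exact Finset.sum_nonneg fun v _ => div_nonneg (sq_nonneg _) (hd v).le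
    have : D0 + 1 ≤ Dlam edge w s lam η := by
      unfold Dlam
      linarith
    linarith
theorem stmt18 (edge : E → Finset V) (hne : ∀ e, (edge e).Nonempty)
    (w : E → ℝ) (hw : ∀ e, 0 < w e) (s : V → ℝ)
    (lam : ℝ) (hlam : 0 < lam)
    (hd : ∀ v, 0 < degw edge w v) :
    ∃ xstar : V → ℝ,
      (∀ x, Plam edge hne w s lam xstar ≤ Plam edge hne w s lam x) ∧
      (∀ x, (∀ y, Plam edge hne w s lam x ≤ Plam edge hne w s lam y) → x = xstar) ∧
      ∃ ηstar : E → V → ℝ, memY edge ηstar ∧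
        (∀ η, memY edge η → Dlam edge w s lam ηstar ≤ Dlam edge w s lam η) ∧
        Plam edge hne w s lam xstar = - Dlam edge w s lam ηstar ∧
        ∀ η' : E → V → ℝ, memY edge η' →
          (∀ η, memY edge η → Dlam edge w s lam η' ≤ Dlam edge w s lam η) →
          ∀ v, xstar v = (s v - Bmap η' v) / (lam * degw edge w v) := by
  obtain ⟨ηstar, hηY, hηmin⟩ := D_exists edge hne w s lam hw hlam hd
  set xstar : V → ℝ := fun v => (s v - Bmap ηstar v) / (lam * degw edge w v) with hxs
  obtain ⟨hPeq, hPmin⟩ := strong_dual edge hne w s lam hw hlam hd ηstar hηY hηmin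
    xstar (fun _ => rfl)
  refine ⟨xstar, hPmin, ?_, ηstar, hηY, hηmin, hPeq, ?_⟩
  · intro x hxmin
    exact P_uniq edge hne w s lam hw hlam hd x xstar hxmin hPmin
  · intro η' hη'Y hη'min v
    set x2 : V → ℝ := fun v => (s v - Bmap η' v) / (lam * degw edge w v) with hx2
    obtain ⟨hPeq2, hPmin2⟩ := strong_dual edge hne w s lam hw hlam hd η' hη'Y hη'min
      x2 (fun _ => rfl)
    have h : x2 = xstar := P_uniq edge hne w s lam hw hlam hd x2 xstar hPmin2 hPmin
    exact (congrFun h v).symm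

end
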